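/- For the base case k = 1 of the inverse factorial moment identity: if Y ~ NHG(S, G, T) with B = S - G ≥ T ≥ 2 and L = Y + T, then E[(T-1)/(L-1)] = B/S. -/

import Mathlib

open Finset

private lemma key (t : ℕ) : ∀ m n : ℕ,
    ∑ g ∈ Finset.range (n + 1),
        (g + t).choose g * ((n - g) + m).choose (n - g)
      = (n + t + m + 1).choose n := by
  intro m
  induction m with
  | zero =>
    intro n
    have h1 : ∀ g ∈ Finset.range (n + 1),
        (g + t).choose g * ((n - g) + 0).choose (n - g) = (g + t).choose t := by
      intro g _
      rw [← Nat.choose_symm (Nat.le_add_left t g)]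
      simp [Nat.choose_self]
    rw [Finset.sum_congr rfl h1]
    have h3 : ∑ g ∈ Finset.range (n + 1), (g + t).choose t
        = ∑ j ∈ Finset.Icc t (n + t), j.choose t := by
      rw [← Finset.Ico_add_one_right_eq_Icc, Finset.sum_Ico_eq_sum_range]
      have : n + t + 1 - t = n + 1 := by omega
      rw [this]
      apply Finset.sum_congr rfl
      intro g _
      congr 1
      omega
    rw [h3, Nat.sum_Icc_choose]
    rw [← Nat.choose_symm (show n ≤ n + t + 1 by omega)]
    congr 1
    omega
  | succ m ih =>
    intro n
    induction n with
    | zero => simp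
    | succ n ihn =>
      rw [Finset.sum_range_succ]
      have hsplit : ∀ g ∈ Finset.range (n + 1),
          (g + t).choose g * ((n + 1 - g) + (m + 1)).choose (n + 1 - g)
          = (g + t).choose g * ((n - g) + (m + 1)).choose (n - g)
            + (g + t).choose g * ((n + 1 - g) + m).choose (n + 1 - g) := by
        intro g hg
        have hg' : g ≤ n := by
          have := Finset.mem_range.mp hg; omega
        have e0 : n + 1 - g = (n - g) + 1 := by omega
        rw [e0]
        have e1 : (n - g) + 1 + (m + 1) = ((n - g) + (m + 1)) + 1 := by omega
        rw [e1, Nat.choose_succ_succ', Nat.mul_add]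
        have e2 : ((n - g) + (m + 1)).choose ((n - g) + 1)
            = ((n - g) + 1 + m).choose ((n - g) + 1) := by
          congr 1
          omega
        rw [e2]
      rw [Finset.sum_congr rfl hsplit, Finset.sum_add_distrib]
      have A := ihn
      have Bv := ih (n + 1)
      rw [Finset.sum_range_succ] at Bv
      simp only [Nat.sub_self, Nat.zero_add, Nat.choose_zero_right, Nat.mul_one] at Bv ⊢
      rw [A]
      have eR : (n + 1) + t + (m + 1) + 1 = (n + t + (m + 1) + 1) + 1 := by omega
      rw [eR, Nat.choose_succ_succ']
      have eB : (n + 1) + t + m + 1 = n + t + (m + 1) + 1 := by omega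
      rw [eB] at Bv
      omega

/-- The probability mass function of the negative hypergeometric distribution
`NHG(S, G, T)`. -/
noncomputable def nhgWeight (S G T g : ℕ) : ℝ :=
  (Nat.choose (g + T - 1) g * Nat.choose (S - T - g) (G - g) : ℝ) / (Nat.choose S G : ℝ)

/-- **Base case `k = 1` of the inverse factorial moment identity.** If
`Y ~ NHG(S, G, T)` with `B = S - G ≥ T ≥ 2` and `L = Y + T`, then
`E[(T-1)/(L-1)] = B/S`. -/
theorem nhg_inverse_moment_base (S B G T : ℕ) (hG : G = S - B) (hBS : B ≤ S)
    (hT2 : 2 ≤ T) (hTB : T ≤ B) :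
    ∑ g ∈ Finset.range (G + 1),
        (((T : ℝ) - 1) / ((g : ℝ) + (T : ℝ) - 1)) * nhgWeight S G T g
      = (B : ℝ) / (S : ℝ) := by
  have hGS : G + T ≤ S := by omega
  have hS : 2 ≤ S := by omega
  -- pointwise rewriting
  have hpt : ∀ g ∈ Finset.range (G + 1),
      (((T : ℝ) - 1) / ((g : ℝ) + (T : ℝ) - 1)) * nhgWeight S G T g
        = (((g + (T - 2)).choose g * ((G - g) + (S - T - G)).choose (G - g) : ℕ) : ℝ)
            / (S.choose G : ℝ) := by
    intro g hg
    have hg' : g ≤ G := by have := Finset.mem_range.mp hg; omega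
    have hnat : (g + (T - 2)).choose g * (g + T - 1) = (g + T - 1).choose g * (T - 1) := by
      have h := Nat.choose_mul_succ_eq (g + (T - 2)) g
      have e1 : g + (T - 2) + 1 = g + T - 1 := by omega
      have e2 : g + (T - 2) + 1 - g = T - 1 := by omega
      rw [e2, e1] at h
      exact h
    have hcast : ((g + T - 1 : ℕ) : ℝ) = (g : ℝ) + (T : ℝ) - 1 := by
      have : (g + T - 1 : ℕ) = g + (T - 1) := by omega
      rw [this]
      push_cast [Nat.cast_sub (by omega : 1 ≤ T)]
      ring
    have hne : (g : ℝ) + (T : ℝ) - 1 ≠ 0 := by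
      have h2 : (2 : ℝ) ≤ (T : ℝ) := by exact_mod_cast hT2
      have hg0 : (0 : ℝ) ≤ (g : ℝ) := Nat.cast_nonneg g
      intro hc
      linarith
    have e3 : S - T - g = (G - g) + (S - T - G) := by omega
    rw [nhgWeight, e3]
    have hR : ((T : ℝ) - 1) * ((g + T - 1).choose g : ℝ)
        = ((g : ℝ) + (T : ℝ) - 1) * ((g + (T - 2)).choose g : ℝ) := by
      have := congrArg (fun x : ℕ => (x : ℝ)) hnat
      rw [Nat.cast_mul, Nat.cast_mul, Nat.cast_sub (by omega : 1 ≤ T), hcast] at this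
      push_cast at this
      linear_combination -this
    have hCne : (S.choose G : ℝ) ≠ 0 :=
      Nat.cast_ne_zero.mpr (Nat.choose_pos (by omega)).ne'
    push_cast
    rw [div_mul_div_comm, div_eq_div_iff (mul_ne_zero hne hCne) hCne]
    linear_combination ((((G - g) + (S - T - G)).choose (G - g) : ℝ) * (S.choose G : ℝ)) * hR
  rw [Finset.sum_congr rfl hpt]
  rw [← Finset.sum_div, ← Nat.cast_sum]
  rw [key (T - 2) (S - T - G) G]
  have e4 : G + (T - 2) + (S - T - G) + 1 = S - 1 := by omega
  rw [e4]
  -- final ratio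
  have hnat2 : (S - 1).choose G * S = S.choose G * B := by
    have h := Nat.choose_mul_succ_eq (S - 1) G
    have e5 : S - 1 + 1 = S := by omega
    have e6 : S - 1 + 1 - G = B := by omega
    rw [e6, e5] at h
    exact h
  have hSne : (S : ℝ) ≠ 0 := Nat.cast_ne_zero.mpr (by omega)
  have hCne : (S.choose G : ℝ) ≠ 0 :=
    Nat.cast_ne_zero.mpr (Nat.choose_pos (by omega)).ne'
  rw [div_eq_div_iff hCne hSne]
  have := congrArg (fun x : ℕ => (x : ℝ)) hnat2
  push_cast at this
  linear_combination this
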